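/- Let O and H be the circumcenter and orthocenter of triangle ABC with circumradius R, and let K = diag(S_A, S_B, S_C) act on normalized barycentric coordinate vectors. Then O K Oᵀ + H K Hᵀ = R². -/

import Mathlib

open scoped RealInnerProductSpace

noncomputable section

abbrev Pt := EuclideanSpace ℝ (Fin 2)

/-- Signed area of triangle XYZ in the plane. -/
def sArea (X Y Z : Pt) : ℝ :=
  ((Y 0 - X 0) * (Z 1 - X 1) - (Z 0 - X 0) * (Y 1 - X 1)) / 2

/-- Conway symbol: `conwayA A B C = S_A = (b^2 + c^2 - a^2)/2`. -/
def conwayA (X Y Z : Pt) : ℝ :=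
  (dist Z X ^ 2 + dist X Y ^ 2 - dist Y Z ^ 2) / 2

/-- The bilinear form given by the metric matrix K = diag (S_A, S_B, S_C). -/
def Kf (A B C : Pt) (u v : Fin 3 → ℝ) : ℝ :=
  conwayA A B C * u 0 * v 0 + conwayA B C A * u 1 * v 1 + conwayA C A B * u 2 * v 2

/-- The point with (normalized) barycentric coordinates `u` w.r.t. A, B, C. -/
def bary (A B C : Pt) (u : Fin 3 → ℝ) : Pt :=
  u 0 • A + u 1 • B + u 2 • C

private lemma inner_comb (u v : Pt) (a b c d : ℝ) :
    ⟪a • u + b • v, c • u + d • v⟫ =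
      a*c*⟪u,u⟫ + (a*d+b*c)*⟪u,v⟫ + b*d*⟪v,v⟫ := by
  simp [inner_add_left, inner_add_right, real_inner_smul_left, real_inner_smul_right,
    real_inner_comm v u]
  ring

private lemma inner_comb1 (u v : Pt) (a b : ℝ) :
    ⟪a • u + b • v, u⟫ = a*⟪u,u⟫ + b*⟪u,v⟫ := by
  simp [inner_add_left, real_inner_smul_left, real_inner_comm v u]

private lemma inner_comb2 (u v : Pt) (a b : ℝ) :
    ⟪a • u + b • v, v⟫ = a*⟪u,v⟫ + b*⟪v,v⟫ := by
  simp [inner_add_left, real_inner_smul_left]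

set_option maxHeartbeats 1000000 in
theorem stmt8 (A B C O Hpt : Pt) (h : sArea A B C ≠ 0)
    (hO : dist O A = dist O B ∧ dist O B = dist O C)
    (hH1 : ⟪Hpt - A, C - B⟫ = 0) (hH2 : ⟪Hpt - B, A - C⟫ = 0)
    (hH3 : ⟪Hpt - C, B - A⟫ = 0)
    (Ob Hb : Fin 3 → ℝ) (hOb1 : Ob 0 + Ob 1 + Ob 2 = 1) (hOb : O = bary A B C Ob)
    (hHb1 : Hb 0 + Hb 1 + Hb 2 = 1) (hHb : Hpt = bary A B C Hb)
    (R : ℝ) (hR : R = dist O A) :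
    Kf A B C Ob Ob + Kf A B C Hb Hb = R ^ 2 := by
  set e1 : Pt := B - A with he1
  set e2 : Pt := C - A with he2
  set cc : ℝ := ⟪e1, e1⟫ with hcc
  set bb : ℝ := ⟪e2, e2⟫ with hbb
  set m : ℝ := ⟪e1, e2⟫ with hm
  have hO0 : Ob 0 = 1 - Ob 1 - Ob 2 := by linarith
  have hH0 : Hb 0 = 1 - Hb 1 - Hb 2 := by linarith
  -- displacement vectors in the e1, e2 basis
  have hOA : O - A = Ob 1 • e1 + Ob 2 • e2 := by
    rw [hOb]; simp only [bary, hO0, he1, he2]; module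
  have hOB : O - B = (Ob 1 - 1) • e1 + Ob 2 • e2 := by
    rw [hOb]; simp only [bary, hO0, he1, he2]; module
  have hOC : O - C = Ob 1 • e1 + (Ob 2 - 1) • e2 := by
    rw [hOb]; simp only [bary, hO0, he1, he2]; module
  have hHB : Hpt - B = (Hb 1 - 1) • e1 + Hb 2 • e2 := by
    rw [hHb]; simp only [bary, hH0, he1, he2]; module
  have hHC : Hpt - C = Hb 1 • e1 + (Hb 2 - 1) • e2 := by
    rw [hHb]; simp only [bary, hH0, he1, he2]; module
  -- circumcenter equations
  have hOA2 : dist O A ^ 2 =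
      Ob 1*Ob 1*cc + (Ob 1*Ob 2+Ob 2*Ob 1)*m + Ob 2*Ob 2*bb := by
    rw [dist_eq_norm, ← real_inner_self_eq_norm_sq, hOA, inner_comb]
  have hOB2 : dist O B ^ 2 =
      (Ob 1-1)*(Ob 1-1)*cc + ((Ob 1-1)*Ob 2+Ob 2*(Ob 1-1))*m + Ob 2*Ob 2*bb := by
    rw [dist_eq_norm, ← real_inner_self_eq_norm_sq, hOB, inner_comb]
  have hOC2 : dist O C ^ 2 =
      Ob 1*Ob 1*cc + (Ob 1*(Ob 2-1)+(Ob 2-1)*Ob 1)*m + (Ob 2-1)*(Ob 2-1)*bb := by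
    rw [dist_eq_norm, ← real_inner_self_eq_norm_sq, hOC, inner_comb]
  have E1 : 2*(Ob 1*cc + Ob 2*m) = cc := by
    have hab : dist O A ^ 2 = dist O B ^ 2 := by rw [hO.1]
    rw [hOA2, hOB2] at hab; linear_combination hab
  have E2 : 2*(Ob 1*m + Ob 2*bb) = bb := by
    have hac : dist O A ^ 2 = dist O C ^ 2 := by rw [hO.1, hO.2]
    rw [hOA2, hOC2] at hac; linear_combination hac
  -- orthocenter equations
  have E3 : (Hb 1-1)*m + Hb 2*bb = 0 := by
    have hAC' : A - C = -e2 := by rw [he2]; module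
    rw [hHB, hAC', inner_neg_right, inner_comb2, neg_eq_zero] at hH2
    exact hH2
  have E4 : Hb 1*cc + (Hb 2-1)*m = 0 := by
    rw [hHC, inner_comb1] at hH3
    exact hH3
  -- nondegeneracy
  have hD : cc*bb - m^2 = (2 * sArea A B C)^2 := by
    have h1 : cc = (B 0 - A 0)^2 + (B 1 - A 1)^2 := by
      rw [hcc, he1]; simp only [PiLp.inner_apply, Fin.sum_univ_two, RCLike.inner_apply, PiLp.sub_apply, conj_trivial]
      try ring
    have h2 : bb = (C 0 - A 0)^2 + (C 1 - A 1)^2 := by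
      rw [hbb, he2]; simp only [PiLp.inner_apply, Fin.sum_univ_two, RCLike.inner_apply, PiLp.sub_apply, conj_trivial]
      try ring
    have h3 : m = (B 0 - A 0)*(C 0 - A 0) + (B 1 - A 1)*(C 1 - A 1) := by
      rw [hm, he1, he2]; simp only [PiLp.inner_apply, Fin.sum_univ_two, RCLike.inner_apply, PiLp.sub_apply, conj_trivial]
      try ring
    rw [h1, h2, h3, sArea]; ring
  have hDne : cc*bb - m^2 ≠ 0 := by
    rw [hD]; positivity
  -- solve for the barycentric coordinates
  have hx : Ob 1 = bb*(cc-m)/(2*(cc*bb - m^2)) := by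
    rw [eq_div_iff (by simpa using hDne : 2*(cc*bb - m^2) ≠ 0)]
    linear_combination bb*E1 - m*E2
  have hy : Ob 2 = cc*(bb-m)/(2*(cc*bb - m^2)) := by
    rw [eq_div_iff (by simpa using hDne : 2*(cc*bb - m^2) ≠ 0)]
    linear_combination cc*E2 - m*E1
  have hp : Hb 1 = m*(bb-m)/(cc*bb - m^2) := by
    rw [eq_div_iff hDne]
    linear_combination bb*E4 - m*E3
  have hq : Hb 2 = m*(cc-m)/(cc*bb - m^2) := by
    rw [eq_div_iff hDne]
    linear_combination cc*E3 - m*E4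
  -- Conway symbols
  have hdCA : dist C A ^ 2 = bb := by
    rw [dist_eq_norm, ← real_inner_self_eq_norm_sq, hbb, he2]
  have hdAB : dist A B ^ 2 = cc := by
    rw [dist_eq_norm, ← norm_neg, neg_sub, ← real_inner_self_eq_norm_sq, hcc, he1]
  have hdBC : dist B C ^ 2 = cc - 2*m + bb := by
    have h5 : B - C = (1:ℝ) • e1 + (-1:ℝ) • e2 := by rw [he1, he2]; module
    rw [dist_eq_norm, ← real_inner_self_eq_norm_sq, h5]
    linear_combination inner_comb e1 e2 1 (-1) 1 (-1)
  have c1 : conwayA A B C = m := by rw [conwayA, hdCA, hdAB, hdBC]; ring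
  have c2 : conwayA B C A = cc - m := by rw [conwayA, hdAB, hdBC, hdCA]; ring
  have c3 : conwayA C A B = bb - m := by rw [conwayA, hdBC, hdCA, hdAB]; ring
  -- finish
  rw [hR, hOA2]
  simp only [Kf, c1, c2, c3, hO0, hH0]
  rw [hx, hy, hp, hq]
  have hDne' : bb * cc - m ^ 2 ≠ 0 := by rw [mul_comm]; exact hDne
  field_simp
  ring
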